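/- Let p be a prime, m < n, A = ℤ/p^m ⊕ ℤ/p^n, and let α ∈ End(A) satisfy α(A) ⊆ p^(n-m)·A. Then the left ideal (End A)·α is nilpotent; in particular α belongs to the Jacobson radical of End(A). -/

import Mathlib

theorem leftIdeal_nilpotent_of_range_le_smul (p m n : ℕ) (hp : p.Prime) (hmn : m < n)
    (α : AddMonoid.End (ZMod (p ^ m) × ZMod (p ^ n)))
    (hα : ∀ a : ZMod (p ^ m) × ZMod (p ^ n),
      ∃ b : ZMod (p ^ m) × ZMod (p ^ n), α a = p ^ (n - m) • b) :
    (∃ N : ℕ, 1 ≤ N ∧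
      ∀ β : Fin N → AddMonoid.End (ZMod (p ^ m) × ZMod (p ^ n)),
        (List.ofFn (fun i => β i * α)).prod = 0) ∧
    α ∈ (⊥ : Ideal (AddMonoid.End (ZMod (p ^ m) × ZMod (p ^ n)))).jacobson := by
  set A := ZMod (p ^ m) × ZMod (p ^ n) with hA
  -- killing lemma
  have hkill : ∀ k : ℕ, n ≤ k → ∀ x : A, p ^ k • x = 0 := by
    intro k hk x
    have h1 : ((p ^ k : ℕ) : ZMod (p ^ m)) = 0 :=
      (ZMod.natCast_eq_zero_iff _ _).mpr
        (pow_dvd_pow p (le_of_lt (lt_of_lt_of_le hmn hk)))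
    have h2 : ((p ^ k : ℕ) : ZMod (p ^ n)) = 0 :=
      (ZMod.natCast_eq_zero_iff _ _).mpr (pow_dvd_pow p hk)
    have : p ^ k • x = (p ^ k • x.1, p ^ k • x.2) := rfl
    rw [this, Prod.mk_eq_zero]
    constructor
    · rw [nsmul_eq_mul, h1, zero_mul]
    · rw [nsmul_eq_mul, h2, zero_mul]
  -- composition lemma
  have hcomp : ∀ l : List (AddMonoid.End A),
      (∀ f ∈ l, ∀ a : A, ∃ b : A, f a = p ^ (n - m) • b) →
      ∀ a : A, ∃ b : A, l.prod a = p ^ (l.length * (n - m)) • b := by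
    intro l hl
    induction l with
    | nil => intro a; exact ⟨a, by simp⟩
    | cons f t ih =>
      intro a
      obtain ⟨b, hb⟩ := ih (fun g hg => hl g (List.mem_cons_of_mem _ hg)) a
      obtain ⟨c, hc⟩ := hl f List.mem_cons_self b
      refine ⟨c, ?_⟩
      have : (f :: t).prod a = f (t.prod a) := rfl
      rw [this, hb, map_nsmul, hc, smul_smul, ← pow_add]
      congr 2
      simp [List.length_cons, add_mul]
  have key : ∀ l : List (AddMonoid.End A),
      (∀ f ∈ l, ∀ a : A, ∃ b : A, f a = p ^ (n - m) • b) →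
      l.length = n → l.prod = 0 := by
    intro l hl hlen
    apply AddMonoidHom.ext
    intro a
    obtain ⟨b, hb⟩ := hcomp l hl a
    show l.prod a = (0 : AddMonoid.End A) a
    rw [hb, hkill _ ?_ b]
    · rfl
    · rw [hlen]
      have h1 : 1 ≤ n - m := Nat.le_sub_of_add_le (by omega)
      calc n = n * 1 := (mul_one n).symm
        _ ≤ n * (n - m) := Nat.mul_le_mul_left n h1
  have hprop : ∀ β : AddMonoid.End A, ∀ a : A, ∃ b : A, (β * α) a = p ^ (n - m) • b := by
    intro β a
    obtain ⟨b, hb⟩ := hα a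
    refine ⟨β b, ?_⟩
    show β (α a) = p ^ (n - m) • β b
    rw [hb, map_nsmul]
  have main : ∀ β : Fin n → AddMonoid.End A,
      (List.ofFn (fun i => β i * α)).prod = 0 := by
    intro β
    apply key
    · intro f hf a
      rw [List.mem_ofFn] at hf
      obtain ⟨i, hi⟩ := hf
      rw [← hi]
      exact hprop (β i) a
    · simp
  constructor
  · exact ⟨n, by omega, main⟩
  · rw [Ideal.jacobson]
    rw [Submodule.mem_sInf]
    intro J hJ
    by_contra hαJ
    have htop : J ⊔ Ideal.span {α} = ⊤ := by
      by_contra hne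
      have heq := hJ.2.eq_of_le hne le_sup_left
      apply hαJ
      have : α ∈ J ⊔ Ideal.span {α} :=
        Submodule.mem_sup_right (Ideal.subset_span (Set.mem_singleton α))
      rwa [← heq] at this
    have h1 : (1 : AddMonoid.End A) ∈ J ⊔ Ideal.span {α} := htop ▸ Submodule.mem_top
    rw [Submodule.mem_sup] at h1
    obtain ⟨y, hy, z, hz, hyz⟩ := h1
    rw [Ideal.mem_span_singleton'] at hz
    obtain ⟨β, hβ⟩ := hz
    have hnil : IsNilpotent (β * α) := by
      refine ⟨n, ?_⟩
      have := main (fun _ => β)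
      rwa [List.ofFn_const, List.prod_replicate] at this
    have hy' : y = 1 - β * α := by rw [← hyz, ← hβ]; abel
    have hu : IsUnit y := hy' ▸ hnil.isUnit_one_sub
    exact hJ.2.ne_top (Ideal.eq_top_of_isUnit_mem J hy hu)
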